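/- Let V be a finite set, G a simple graph on V with closed neighborhoods N_v. If Π and Π' are two partitions of V and v ∈ V satisfies |N_v| > 4·φ(Π) and |N_v| > 4·φ(Π'), then [v]_Π = [v]_{Π'}, i.e. the cluster of v is uniquely determined. -/
import Mathlib


open scoped symmDiff

open Finset

variable {V : Type*} [Fintype V] [DecidableEq V]

/-- Closed neighborhood of `v`: `v` together with its adjacent vertices. -/
def nbhd (G : SimpleGraph V) [DecidableRel G.Adj] (v : V) : Finset V :=
  insert v (G.neighborFinset v)

/-- `P` encodes a partition of `V`, where `P v` is the block containing `v`. -/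
def IsPartitionFun (P : V → Finset V) : Prop :=
  (∀ v, v ∈ P v) ∧ ∀ u v : V, u ∈ P v → P u = P v

/-- Maximum disagreement of the partition `P`. -/
def phi (G : SimpleGraph V) [DecidableRel G.Adj] (P : V → Finset V) : ℕ :=
  Finset.univ.sup fun v => ((P v) ∆ (nbhd G v)).card

lemma phi_bound (G : SimpleGraph V) [DecidableRel G.Adj] (P : V → Finset V) (u : V) :
    ((P u) ∆ (nbhd G u)).card ≤ phi G P := by
  exact Finset.le_sup (f := fun v => ((P v) ∆ (nbhd G v)).card) (mem_univ u)

lemma aux_no_cross (G : SimpleGraph V) [DecidableRel G.Adj]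
    (P P' : V → Finset V) (hP : IsPartitionFun P) (hP' : IsPartitionFun P') (v x : V)
    (hv : 4 * phi G P < (nbhd G v).card) (hv' : 4 * phi G P' < (nbhd G v).card)
    (hx : x ∈ P v) (hx' : x ∉ P' v) : False := by
  set φ := phi G P with hφdef
  set ψ := phi G P' with hψdef
  set N := nbhd G v with hNdef
  set S := P v ∩ P' v with hSdef
  set T := S ∩ nbhd G x with hTdef
  have hPx : P x = P v := hP.2 x v hx
  -- N \ P v small
  have h1 : (N \ P v).card ≤ φ := by
    refine le_trans (card_le_card ?_) (phi_bound G P v)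
    intro a ha
    simp only [mem_sdiff, Finset.mem_symmDiff] at *
    tauto
  have h2 : (N \ P' v).card ≤ ψ := by
    refine le_trans (card_le_card ?_) (phi_bound G P' v)
    intro a ha
    simp only [mem_sdiff, Finset.mem_symmDiff] at *
    tauto
  -- N \ S ⊆ union
  have h3 : (N \ S).card ≤ φ + ψ := by
    calc (N \ S).card ≤ ((N \ P v) ∪ (N \ P' v)).card := by
          apply card_le_card
          intro a ha
          simp only [hSdef, mem_sdiff, mem_union, mem_inter] at *
          tauto
      _ ≤ (N \ P v).card + (N \ P' v).card := card_union_le _ _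
      _ ≤ φ + ψ := Nat.add_le_add h1 h2
  have h4 : (S \ nbhd G x).card ≤ φ := by
    refine le_trans (card_le_card ?_) (phi_bound G P x)
    intro a ha
    simp only [hSdef, mem_sdiff, mem_inter, Finset.mem_symmDiff, hPx] at *
    tauto
  -- T ⊆ nbhd G x \ P' x
  have h5 : T.card ≤ ψ := by
    have hsub : T ⊆ nbhd G x \ P' x := by
      intro a ha
      simp only [hTdef, hSdef, mem_inter, mem_sdiff] at ha ⊢
      refine ⟨ha.2, fun haPx => ?_⟩
      have e1 : P' a = P' x := hP'.2 a x haPx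
      have e2 : P' a = P' v := hP'.2 a v ha.1.2
      exact hx' (e2 ▸ e1 ▸ hP'.1 x)
    refine le_trans (card_le_card hsub) (le_trans (card_le_card ?_) (phi_bound G P' x))
    intro a ha
    simp only [mem_sdiff, Finset.mem_symmDiff] at *
    tauto
  have e1 : (N ∩ S).card + (N \ S).card = N.card := card_inter_add_card_sdiff N S
  have e2 : (S ∩ nbhd G x).card + (S \ nbhd G x).card = S.card :=
    card_inter_add_card_sdiff S (nbhd G x)
  have e3 : (N ∩ S).card ≤ S.card := card_le_card (inter_subset_right)
  have e4 : (S ∩ nbhd G x).card = T.card := rfl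
  omega

theorem statement7 (G : SimpleGraph V) [DecidableRel G.Adj]
    (P P' : V → Finset V) (hP : IsPartitionFun P) (hP' : IsPartitionFun P') (v : V)
    (hv : 4 * phi G P < (nbhd G v).card) (hv' : 4 * phi G P' < (nbhd G v).card) :
    P v = P' v := by
  ext x
  constructor
  · intro hx
    by_contra hx'
    exact aux_no_cross G P P' hP hP' v x hv hv' hx hx'
  · intro hx
    by_contra hx'
    exact aux_no_cross G P' P hP' hP v x hv' hv hx hx'
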